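/- Let k ≥ 1 be an integer, C > 0 and T > 0 real numbers, and let β : ℝ → ℝ be nonnegative and nondecreasing on [0,T] with β(s) > 0 for every s ∈ (0,T]. Assume that for almost every s ∈ (0,T), whenever β is differentiable at s with derivative β′(s), one has β(s) ≤ 3C·β′(s)^{(k+1)/k}. Then β(s) ≥ s^{k+1}/((3C)^k·(k+1)^{k+1}) for every s ∈ [0,T]. -/

import Mathlib

open MeasureTheory

/-- **Euclidean-type growth estimate (Lemma 3.1 of the paper).**
Let `k ≥ 1`, `C > 0`, `T > 0` and let `β : ℝ → ℝ` be nonnegative and nondecreasing on `[0,T]`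
with `β(s) > 0` for `s ∈ (0,T]`.  If for almost every `s ∈ (0,T)`, whenever `β` is
differentiable at `s` with derivative `β′(s)`, one has `β(s) ≤ 3C·β′(s)^((k+1)/k)`, then
`β(s) ≥ s^(k+1)/((3C)^k·(k+1)^(k+1))` for every `s ∈ [0,T]`. -/
theorem growth_estimate_euclidean (k : ℕ) (hk : 1 ≤ k) (C T : ℝ) (hC : 0 < C) (hT : 0 < T)
    (β : ℝ → ℝ)
    (hnonneg : ∀ s ∈ Set.Icc (0:ℝ) T, 0 ≤ β s)
    (hmono : MonotoneOn β (Set.Icc (0:ℝ) T))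
    (hpos : ∀ s ∈ Set.Ioc (0:ℝ) T, 0 < β s)
    (hae : ∀ᵐ s ∂volume, s ∈ Set.Ioo (0:ℝ) T → ∀ d : ℝ, HasDerivAt β d s →
      β s ≤ 3 * C * d ^ (((k : ℝ) + 1) / (k : ℝ))) :
    ∀ s ∈ Set.Icc (0:ℝ) T, s ^ (k + 1) / ((3 * C) ^ k * ((k : ℝ) + 1) ^ (k + 1)) ≤ β s := by
  have hk0 : (0:ℝ) < (k:ℝ) := by exact_mod_cast hk
  have hk1 : (0:ℝ) < (k:ℝ) + 1 := by linarith
  have h3C : (0:ℝ) < 3 * C := by linarith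
  set p : ℝ := 1 / ((k:ℝ) + 1) with hp_def
  set q : ℝ := ((k:ℝ) + 1) / (k:ℝ) with hq_def
  set r : ℝ := (k:ℝ) / ((k:ℝ) + 1) with hr_def
  have hp_pos : 0 < p := by positivity
  have hq_pos : 0 < q := by positivity
  have hr_pos : 0 < r := by positivity
  -- clamped version of β
  set βc : ℝ → ℝ := fun x => β (min (max x 0) T) with hβc_def
  have hclamp_mem : ∀ x : ℝ, min (max x 0) T ∈ Set.Icc (0:ℝ) T := fun x =>
    ⟨le_min (le_max_right x 0) hT.le, min_le_right _ _⟩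
  have hβc_eq : ∀ x ∈ Set.Icc (0:ℝ) T, βc x = β x := by
    intro x hx
    simp only [hβc_def]
    rw [max_eq_left hx.1, min_eq_left hx.2]
  have hβc_mono : Monotone βc := by
    intro x y hxy
    exact hmono (hclamp_mem x) (hclamp_mem y)
      (min_le_min (max_le_max hxy le_rfl) le_rfl)
  have hβc_nonneg : ∀ x, 0 ≤ βc x := fun x => hnonneg _ (hclamp_mem x)
  -- the rescaled function g = βc ^ p
  set g : ℝ → ℝ := fun x => (βc x) ^ p with hg_def
  have hg_mono : Monotone g := fun x y hxy =>
    Real.rpow_le_rpow (hβc_nonneg x) (hβc_mono hxy) hp_pos.le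
  have hg_nonneg : ∀ x, 0 ≤ g x := fun x => Real.rpow_nonneg (hβc_nonneg x) p
  set c : ℝ := p / (3 * C) ^ r with hc_def
  have h3Cr_pos : 0 < (3 * C) ^ r := Real.rpow_pos_of_pos h3C r
  have hc_pos : 0 < c := by positivity
  set μ : Measure ℝ := hg_mono.stieltjesFunction.measure with hμ_def
  -- Key a.e. lower bound on the Radon-Nikodym derivative of the Stieltjes measure of g
  have key : ∀ᵐ x ∂volume, x ∈ Set.Ioo (0:ℝ) T →
      ENNReal.ofReal c ≤ μ.rnDeriv volume x := by
    filter_upwards [hae, hβc_mono.ae_hasDerivAt, hg_mono.ae_hasDerivAt] with x h1 h2 h3 hx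
    have hβx : 0 < β x := hpos x ⟨hx.1, hx.2.le⟩
    have heq : β =ᶠ[nhds x] βc := by
      filter_upwards [Ioo_mem_nhds hx.1 hx.2] with y hy
      exact (hβc_eq y ⟨hy.1.le, hy.2.le⟩).symm
    set d : ℝ := (((hβc_mono.stieltjesFunction).measure).rnDeriv volume x).toReal with hd_def
    have hβd : HasDerivAt β d x := h2.congr_of_eventuallyEq heq
    have hd0 : 0 ≤ d := ENNReal.toReal_nonneg
    have hineq : β x ≤ 3 * C * d ^ q := h1 hx d hβd
    have hdpos : 0 < d := by
      rcases hd0.lt_or_eq with h | h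
      · exact h
      · exfalso
        rw [← h, Real.zero_rpow hq_pos.ne'] at hineq
        nlinarith
    -- lower bound on d
    have hdlow : (β x) ^ r / (3 * C) ^ r ≤ d := by
      have h1' : β x / (3 * C) ≤ d ^ q := by
        rw [div_le_iff₀ h3C]; linarith [hineq]
      have h2' : (β x / (3 * C)) ^ r ≤ (d ^ q) ^ r :=
        Real.rpow_le_rpow (by positivity) h1' hr_pos.le
      have h3' : (d ^ q) ^ r = d := by
        rw [← Real.rpow_mul hd0, hq_def, hr_def,
          show ((k:ℝ)+1)/(k:ℝ) * ((k:ℝ)/((k:ℝ)+1)) = 1 by field_simp]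
        exact Real.rpow_one d
      rw [h3', Real.div_rpow hβx.le h3C.le] at h2'
      exact h2'
    -- derivative of g at x
    have hge : g =ᶠ[nhds x] fun y => (β y) ^ p := by
      filter_upwards [heq] with y hy
      simp only [hg_def, hy]
    have hgd : HasDerivAt g (d * p * β x ^ (p - 1)) x := by
      have := hβd.rpow_const (p := p) (Or.inl hβx.ne')
      exact this.congr_of_eventuallyEq hge
    have hgd' : (μ.rnDeriv volume x).toReal = d * p * β x ^ (p - 1) := h3.unique hgd
    -- the derivative of g is at least c
    have hβp1 : (0:ℝ) < β x ^ (p - 1) := Real.rpow_pos_of_pos hβx _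
    have hcle : c ≤ (μ.rnDeriv volume x).toReal := by
      rw [hgd']
      have e1 : β x ^ r * β x ^ (p - 1) = 1 := by
        rw [← Real.rpow_add hβx]
        have : r + (p - 1) = 0 := by
          simp only [hr_def, hp_def]; field_simp; ring
        rw [this, Real.rpow_zero]
      have e2 : β x ^ r / (3 * C) ^ r * p * β x ^ (p - 1) = c := by
        rw [hc_def]
        field_simp
        linear_combination e1
      calc c = β x ^ r / (3 * C) ^ r * p * β x ^ (p - 1) := e2.symm
        _ ≤ d * p * β x ^ (p - 1) := by
            apply mul_le_mul_of_nonneg_right _ hβp1.le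
            exact mul_le_mul_of_nonneg_right hdlow hp_pos.le
    have hfin : μ.rnDeriv volume x ≠ ⊤ := by
      intro htop
      rw [htop] at hcle
      simp at hcle
      linarith
    exact ENNReal.ofReal_le_of_le_toReal hcle
  -- integrate: for 0 < a < b < s ≤ T, c * (b - a) ≤ g s
  have step2 : ∀ s ∈ Set.Ioc (0:ℝ) T, ∀ a b : ℝ, 0 < a → a < b → b < s →
      c * (b - a) ≤ g s := by
    intro s hs a b ha hab hbs
    have hsub : Set.Ioc a b ⊆ Set.Ioo (0:ℝ) T := fun x hx =>
      ⟨ha.trans hx.1, lt_of_le_of_lt hx.2 (hbs.trans_le hs.2)⟩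
    have hμab : ENNReal.ofReal (c * (b - a)) ≤ μ (Set.Ioc a b) := by
      calc ENNReal.ofReal (c * (b - a))
          = ENNReal.ofReal c * volume (Set.Ioc a b) := by
            rw [Real.volume_Ioc, ← ENNReal.ofReal_mul hc_pos.le]
        _ = ∫⁻ _ in Set.Ioc a b, ENNReal.ofReal c ∂volume := by
            rw [setLIntegral_const]
        _ ≤ ∫⁻ x in Set.Ioc a b, μ.rnDeriv volume x ∂volume := by
            apply lintegral_mono_ae
            filter_upwards [ae_restrict_of_ae key, ae_restrict_mem measurableSet_Ioc]
              with x hx hmem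
            exact hx (hsub hmem)
        _ ≤ μ (Set.Ioc a b) := Measure.setLIntegral_rnDeriv_le _
    rw [hμ_def, StieltjesFunction.measure_Ioc] at hμab
    have hG : c * (b - a) ≤ hg_mono.stieltjesFunction b - hg_mono.stieltjesFunction a := by
      have hnn : (0:ℝ) ≤ hg_mono.stieltjesFunction b - hg_mono.stieltjesFunction a :=
        sub_nonneg.2 (hg_mono.stieltjesFunction.mono hab.le)
      exact (ENNReal.ofReal_le_ofReal_iff hnn).1 hμab
    have hGb : hg_mono.stieltjesFunction b ≤ g s := by
      rw [hg_mono.stieltjesFunction_eq]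
      exact hg_mono.rightLim_le hbs
    have hGa : 0 ≤ hg_mono.stieltjesFunction a := by
      rw [hg_mono.stieltjesFunction_eq]
      exact (hg_nonneg a).trans (hg_mono.le_rightLim le_rfl)
    linarith
  -- limit: c * s ≤ g s for s ∈ (0, T]
  have step3 : ∀ s ∈ Set.Ioc (0:ℝ) T, c * s ≤ g s := by
    intro s hs
    refine le_of_forall_pos_le_add ?_
    intro ε hε
    set δ : ℝ := min (ε / (2 * c)) (s / 4) with hδ_def
    have hδpos : 0 < δ := lt_min (by positivity) (by have := hs.1; positivity)
    have hδs : δ < s / 2 := (min_le_right _ _).trans_lt (by linarith [hs.1])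
    have h2 := step2 s hs δ (s - δ) hδpos (by linarith) (by linarith)
    have hδε : 2 * c * δ ≤ ε := by
      have : δ ≤ ε / (2 * c) := min_le_left _ _
      calc 2 * c * δ ≤ 2 * c * (ε / (2 * c)) := by
            apply mul_le_mul_of_nonneg_left this (by positivity)
        _ = ε := by field_simp
    nlinarith [h2]
  -- conclusion
  intro s hs
  rcases eq_or_lt_of_le hs.1 with h0 | h0
  · rw [← h0]
    rw [zero_pow (Nat.succ_ne_zero k), zero_div]
    exact hnonneg 0 ⟨le_rfl, hT.le⟩
  · have hsIoc : s ∈ Set.Ioc (0:ℝ) T := ⟨h0, hs.2⟩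
    have hβs : 0 < β s := hpos s hsIoc
    have hgs : g s = β s ^ p := by rw [hg_def]; simp only; rw [hβc_eq s hs]
    have h3 : c * s ≤ β s ^ p := by rw [← hgs]; exact step3 s hsIoc
    have h4 : (c * s) ^ (k + 1) ≤ (β s ^ p) ^ (k + 1) :=
      pow_le_pow_left₀ (by positivity) h3 _
    have h5 : (β s ^ p) ^ (k + 1) = β s := by
      rw [← Real.rpow_natCast (β s ^ p) (k + 1), ← Real.rpow_mul hβs.le]
      push_cast
      rw [hp_def]
      rw [one_div_mul_eq_div, div_self hk1.ne', Real.rpow_one]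
    have h6 : (c * s) ^ (k + 1) = s ^ (k + 1) / ((3 * C) ^ k * ((k:ℝ) + 1) ^ (k + 1)) := by
      rw [mul_pow, hc_def, div_pow]
      have e3 : ((3 * C) ^ r) ^ (k + 1) = (3 * C) ^ k := by
        rw [← Real.rpow_natCast ((3 * C) ^ r) (k + 1), ← Real.rpow_mul h3C.le,
          ← Real.rpow_natCast (3 * C) k]
        congr 1
        push_cast
        rw [hr_def]
        field_simp
      rw [e3, hp_def, div_pow, one_pow]
      field_simp
    rw [h5] at h4
    rw [← h6]
    exact h4
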